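/- Let −∞ ≤ a < b ≤ ∞ and let I be one of the intervals (a,b), (a,b], [a,b), [a,b]. Let λ, μ : I → ℂ be continuous and let A(t) be the upper-triangular matrix with diagonal entries λ(t), λ(t) and upper-right entry μ(t). Suppose that κ₂₁(t) := ∫_t^b (1 + |∫_t^s μ(τ) dτ|) e^{−∫_t^s Re λ(τ) dτ} ds exists (as a finite, possibly improper, integral) for all t ∈ I, and that K₂₁ := sup_{t∈I} κ₂₁(t) < ∞. Then the system x' = A(t)x is Ulam stable on I with Ulam constant K₂₁ (with respect to the maximum norm on ℂ²). Furthermore, if in addition lim_{t→b⁻} ∫_{t₀}^t Re λ(s) ds = ∞ for t₀ ∈ (a,b), then for every ε > 0 and every continuously differentiable φ : I → ℂ² with sup_{t∈I} ‖φ'(t) − A(t)φ(t)‖∞ ≤ ε, there exists a unique solution x of x' = A(t)x satisfying sup_{t∈I} ‖φ(t) − x(t)‖∞ ≤ K₂₁ε. -/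

import Mathlib

open MeasureTheory Filter Set

noncomputable section

/-- Ulam stability on `I` with constant `K` for the system `x' = A(t) x` on `ℂ²`,
with respect to the maximum norm (the sup norm on `Fin 2 → ℂ`). -/
def UlamStable2C (I : Set ℝ) (A : ℝ → Matrix (Fin 2) (Fin 2) ℂ) (K : ℝ) : Prop :=
  0 < K ∧
  ∀ ε : ℝ, 0 < ε →
    ∀ φ φd : ℝ → Fin 2 → ℂ,
      (∀ t ∈ I, HasDerivWithinAt φ (φd t) I t) →
      ContinuousOn φd I →
      (∀ t ∈ I, ‖φd t - (A t).mulVec (φ t)‖ ≤ ε) →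
      ∃ x : ℝ → Fin 2 → ℂ,
        (∀ t ∈ I, HasDerivWithinAt x ((A t).mulVec (x t)) I t) ∧
        ∀ t ∈ I, ‖φ t - x t‖ ≤ K * ε

/-- `κ₂₁(t) = ∫_t^b (1 + |∫_t^s μ|) exp(-∫_t^s Re λ) ds`. -/
def kappa21 (b : EReal) (l m : ℝ → ℂ) (t : ℝ) : ℝ :=
  ∫ s in {s : ℝ | t < s ∧ (s : EReal) < b},
    (1 + ‖∫ τ in t..s, m τ‖) * Real.exp (-∫ τ in t..s, (l τ).re)

open intervalIntegral in
lemma ftc_within {E : Type*} [NormedAddCommGroup E] [NormedSpace ℝ E] [CompleteSpace E]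
    {I : Set ℝ} (hI : I.OrdConnected) {f : ℝ → E} (hf : ContinuousOn f I)
    {t₀ t : ℝ} (h₀ : t₀ ∈ I) (ht : t ∈ I) :
    HasDerivWithinAt (fun u => ∫ s in t₀..u, f s) (f t) I t := by
  classical
  obtain ⟨c, hcI, hct⟩ : ∃ c, c ∈ I ∧ c ≤ t ∧ (c < t ∨ ∀ u ∈ I, t ≤ u) := by
    by_cases h : ∃ c ∈ I, c < t
    · obtain ⟨c, hcI, hc⟩ := h; exact ⟨c, hcI, hc.le, Or.inl hc⟩
    · push_neg at h
      exact ⟨t, ht, le_rfl, Or.inr fun u hu => h u hu⟩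
  obtain ⟨d, hdI, htd⟩ : ∃ d, d ∈ I ∧ t ≤ d ∧ (t < d ∨ ∀ u ∈ I, u ≤ t) := by
    by_cases h : ∃ d ∈ I, t < d
    · obtain ⟨d, hdI, hd⟩ := h; exact ⟨d, hdI, hd.le, Or.inl hd⟩
    · push_neg at h
      exact ⟨t, ht, le_rfl, Or.inr fun u hu => h u hu⟩
  obtain ⟨hct, hcalt⟩ := hct
  obtain ⟨htd, htdalt⟩ := htd
  have hcd : c ≤ d := hct.trans htd
  set p : ℝ → ℝ := fun u => max (min u d) c with hp
  have hpc : Continuous p := (continuous_id.min continuous_const).max continuous_const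
  have hpmem : ∀ u, p u ∈ I := by
    intro u
    have h1 : c ≤ p u := le_max_right _ _
    have h2 : p u ≤ d := max_le (min_le_right _ _) hcd
    exact hI.out hcI hdI ⟨h1, h2⟩
  have hfp : Continuous (f ∘ p) := (hf.comp_continuous hpc hpmem)
  have hpeq : ∀ u ∈ Icc c d, p u = u := by
    intro u hu
    rw [hp]; simp only; rw [min_eq_left hu.2, max_eq_left hu.1]
  -- G
  set G : ℝ → E := fun u => ∫ s in c..u, f (p s) with hG
  have hGd : HasDerivAt G (f t) t := by
    have := integral_hasDerivAt_right (a := c) (b := t)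
      ((hfp.continuousOn).intervalIntegrable (μ := volume))
      (hfp.stronglyMeasurableAtFilter _ _)
      (hfp.continuousAt (x := t))
    rw [show (f ∘ p) t = f t by simp [Function.comp, hpeq t ⟨hct, htd⟩]] at this
    exact this
  have hii : ∀ u ∈ I, ∀ v ∈ I, IntervalIntegrable f volume u v := fun u hu v hv =>
    (hf.mono (hI.uIcc_subset hu hv)).intervalIntegrable
  have hkey : ∀ u ∈ I ∩ Icc c d, (∫ s in t₀..u, f s) = (∫ s in t₀..c, f s) + G u := by
    intro u hu
    rw [hG]
    have h1 : (∫ s in c..u, f (p s)) = ∫ s in c..u, f s := by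
      apply intervalIntegral.integral_congr
      intro s hs
      have hsub : Set.uIcc c u ⊆ Icc c d :=
        Set.ordConnected_Icc.uIcc_subset (left_mem_Icc.2 hcd) hu.2
      show f (p s) = f s
      rw [hpeq s (hsub hs)]
    show (∫ s in t₀..u, f s) = (∫ s in t₀..c, f s) + ∫ s in c..u, f (p s)
    rw [h1, intervalIntegral.integral_add_adjacent_intervals (hii t₀ h₀ c hcI) (hii c hcI u hu.1)]
  -- now conclude
  have hG' : HasDerivWithinAt (fun u => (∫ s in t₀..c, f s) + G u) (f t) (I ∩ Icc c d) t :=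
    ((hGd.hasDerivWithinAt).const_add _)
  have hF : HasDerivWithinAt (fun u => ∫ s in t₀..u, f s) (f t) (I ∩ Icc c d) t :=
    hG'.congr (fun u hu => hkey u hu) (hkey t ⟨ht, hct, htd⟩)
  -- neighborhood
  set U : Set ℝ := Ioo (if c < t then c else t - 1) (if t < d then d else t + 1) with hU
  have hUnhds : U ∈ nhds t := by
    apply Ioo_mem_nhds
    · split_ifs with h; exacts [h, by linarith]
    · split_ifs with h; exacts [h, by linarith]
  have hsub : I ∩ U ⊆ I ∩ Icc c d := by
    rintro u ⟨huI, hu1, hu2⟩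
    refine ⟨huI, ?_, ?_⟩
    · rcases lt_or_ge u t with h|h
      · rcases hcalt with hc|hc
        · rw [if_pos hc] at hu1; exact hu1.le
        · exact absurd (hc u huI) (not_le.2 h)
      · exact hct.trans h
    · rcases lt_or_ge t u with h|h
      · rcases htdalt with hd|hd
        · rw [if_pos hd] at hu2; exact hu2.le
        · exact absurd (hd u huI) (not_le.2 h)
      · exact h.trans htd
  exact (hasDerivWithinAt_inter hUnhds).1 (hF.mono hsub)

lemma ordConn {a b : EReal} {I : Set ℝ}
    (hI1 : ∀ x : ℝ, a < (x : EReal) → (x : EReal) < b → x ∈ I)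
    (hI2 : ∀ x ∈ I, a ≤ (x : EReal) ∧ (x : EReal) ≤ b) : I.OrdConnected := by
  constructor
  intro x hx y hy z hz
  rcases eq_or_lt_of_le ((hI2 x hx).1.trans (EReal.coe_le_coe_iff.2 hz.1)) with h | h
  · have h1 : (x : EReal) ≤ (z : EReal) := EReal.coe_le_coe_iff.2 hz.1
    have h2 : (z : EReal) ≤ (x : EReal) := h ▸ (hI2 x hx).1
    have : z = x := by exact_mod_cast le_antisymm h2 h1
    exact this ▸ hx
  · rcases eq_or_lt_of_le ((EReal.coe_le_coe_iff.2 hz.2).trans (hI2 y hy).2) with h' | h'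
    · have h1 : (y : EReal) ≤ (z : EReal) := h' ▸ (hI2 y hy).2
      have h2 : (z : EReal) ≤ (y : EReal) := EReal.coe_le_coe_iff.2 hz.2
      have : z = y := by exact_mod_cast le_antisymm h2 h1
      exact this ▸ hy
    · exact hI1 z h h'

lemma Smeas (b : EReal) (t : ℝ) : MeasurableSet {s : ℝ | t < s ∧ (s : EReal) < b} := by
  have : {s : ℝ | t < s ∧ (s : EReal) < b}
      = Ioi t ∩ ((fun s : ℝ => (s : EReal)) ⁻¹' Iio b) := rfl
  rw [this]
  exact measurableSet_Ioi.inter ((continuous_coe_real_ereal.measurable) measurableSet_Iio)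

/-- splitting of the improper integral -/
lemma Ssplit {b : EReal} {I : Set ℝ} (hIoc : I.OrdConnected)
    (hI2 : ∀ x ∈ I, a ≤ (x : EReal) ∧ (x : EReal) ≤ b)
    {g : ℝ → ℂ} (hg : ContinuousOn g I)
    {t t' : ℝ} (ht : t ∈ I) (ht' : t' ∈ I) (htt' : t ≤ t')
    (hint : IntegrableOn g {s : ℝ | t' < s ∧ (s : EReal) < b}) :
    (∫ s in {s : ℝ | t < s ∧ (s : EReal) < b}, g s)
      = (∫ s in t..t', g s) + ∫ s in {s : ℝ | t' < s ∧ (s : EReal) < b}, g s := by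
  have hIcc : IntegrableOn g (Ioc t t') :=
    ((hg.mono (hIoc.out ht ht')).integrableOn_Icc).mono_set Ioc_subset_Icc_self
  rcases eq_or_lt_of_le (hI2 t' ht').2 with hb | hb
  · -- t' = b (as EReal); the tail set is empty
    have he : {s : ℝ | t' < s ∧ (s : EReal) < b} = (∅ : Set ℝ) := by
      ext s
      simp only [mem_setOf_eq, mem_empty_iff_false, iff_false, not_and]
      intro h1 h2
      rw [← hb] at h2
      exact absurd (EReal.coe_lt_coe_iff.1 h2) (not_lt.2 h1.le)
    have hS : {s : ℝ | t < s ∧ (s : EReal) < b} = Ioo t t' := by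
      ext s
      simp only [mem_setOf_eq, mem_Ioo, ← hb, EReal.coe_lt_coe_iff]
    rw [he, hS, setIntegral_empty, add_zero, ← integral_Ioc_eq_integral_Ioo,
      intervalIntegral.integral_of_le htt']
  · -- t' < b
    have hS : {s : ℝ | t < s ∧ (s : EReal) < b}
        = Ioc t t' ∪ {s : ℝ | t' < s ∧ (s : EReal) < b} := by
      ext s
      simp only [mem_setOf_eq, mem_union, mem_Ioc]
      constructor
      · rintro ⟨h1, h2⟩
        rcases le_or_gt s t' with h | h
        · exact Or.inl ⟨h1, h⟩
        · exact Or.inr ⟨h, h2⟩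
      · rintro (⟨h1, h2⟩ | ⟨h1, h2⟩)
        · exact ⟨h1, lt_of_le_of_lt (EReal.coe_le_coe_iff.2 h2) hb⟩
        · exact ⟨htt'.trans_lt h1, h2⟩
    have hdisj : Disjoint (Ioc t t') {s : ℝ | t' < s ∧ (s : EReal) < b} := by
      rw [disjoint_left]
      rintro s ⟨_, h2⟩ ⟨h3, _⟩
      exact absurd h3 (not_lt.2 h2)
    rw [hS, setIntegral_union hdisj (Smeas b t') hIcc hint,
      intervalIntegral.integral_of_le htt']

lemma construction (a b : EReal) (hab : a < b) (I : Set ℝ)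
    (hI1 : ∀ x : ℝ, a < (x : EReal) → (x : EReal) < b → x ∈ I)
    (hI2 : ∀ x ∈ I, a ≤ (x : EReal) ∧ (x : EReal) ≤ b)
    (l m : ℝ → ℂ) (hl : ContinuousOn l I) (hm : ContinuousOn m I)
    (hker : ∀ t ∈ I, IntegrableOn
      (fun s => (1 + ‖∫ τ in t..s, m τ‖) * Real.exp (-∫ τ in t..s, (l τ).re))
      {s : ℝ | t < s ∧ (s : EReal) < b})
    (hbdd : BddAbove (kappa21 b l m '' I))
    (ε : ℝ) (hε : 0 < ε) (φ φd : ℝ → Fin 2 → ℂ)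
    (hφ : ∀ t ∈ I, HasDerivWithinAt φ (φd t) I t)
    (hφd : ContinuousOn φd I)
    (hφε : ∀ t ∈ I, ‖φd t - (!![l t, m t; 0, l t]).mulVec (φ t)‖ ≤ ε) :
    ∃ x : ℝ → Fin 2 → ℂ,
      (∀ t ∈ I, HasDerivWithinAt x ((!![l t, m t; 0, l t]).mulVec (x t)) I t) ∧
      ∀ t ∈ I, ‖φ t - x t‖ ≤ sSup (kappa21 b l m '' I) * ε := by
  classical
  have hIoc : I.OrdConnected := ordConn hI1 hI2
  obtain ⟨q, haq, hqb⟩ := EReal.exists_rat_btwn_of_lt hab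
  set t₀ : ℝ := (q : ℝ) with ht₀def
  have ht₀I : t₀ ∈ I := hI1 t₀ haq hqb
  set S : ℝ → Set ℝ := fun t => {s : ℝ | t < s ∧ (s : EReal) < b} with hS
  have hsubI : ∀ t ∈ I, S t ⊆ I := by
    intro t ht s hs
    exact hI1 s ((hI2 t ht).1.trans_lt (EReal.coe_lt_coe_iff.2 hs.1)) hs.2
  have hii : ∀ (f : ℝ → ℂ), ContinuousOn f I → ∀ u ∈ I, ∀ v ∈ I,
      IntervalIntegrable f volume u v := fun f hf u hu v hv =>
    (hf.mono (hIoc.uIcc_subset hu hv)).intervalIntegrable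
  -- basic functions
  set L : ℝ → ℂ := fun t => ∫ τ in t₀..t, l τ with hLdef
  set M : ℝ → ℂ := fun t => ∫ τ in t₀..t, m τ with hMdef
  set Lr : ℝ → ℝ := fun t => ∫ τ in t₀..t, (l τ).re with hLrdef
  have hL : ∀ t ∈ I, HasDerivWithinAt L (l t) I t := fun t ht => ftc_within hIoc hl ht₀I ht
  have hM : ∀ t ∈ I, HasDerivWithinAt M (m t) I t := fun t ht => ftc_within hIoc hm ht₀I ht
  have hLc : ContinuousOn L I := fun t ht => (hL t ht).continuousWithinAt
  have hMc : ContinuousOn M I := fun t ht => (hM t ht).continuousWithinAt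
  have hLre : ∀ t ∈ I, (L t).re = Lr t := by
    intro t ht
    have := Complex.reCLM.intervalIntegral_comp_comm (hii l hl t₀ ht₀I t ht)
    simp only [Complex.reCLM_apply] at this
    rw [hLdef, hLrdef]; exact this.symm
  -- defect
  set f₁ : ℝ → ℂ := fun t => φd t 0 - (l t * φ t 0 + m t * φ t 1) with hf₁def
  set f₂ : ℝ → ℂ := fun t => φd t 1 - l t * φ t 1 with hf₂def
  have happly : ∀ (v : Fin 2 → ℂ) (t : ℝ),
      ((!![l t, m t; 0, l t]).mulVec v) 0 = l t * v 0 + m t * v 1 ∧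
      ((!![l t, m t; 0, l t]).mulVec v) 1 = l t * v 1 := by
    intro v t
    constructor <;>
      simp [Matrix.mulVec, dotProduct, Fin.sum_univ_two, Matrix.vecHead, Matrix.vecTail]
  have hf₁ε : ∀ t ∈ I, ‖f₁ t‖ ≤ ε := by
    intro t ht
    have h0 := norm_le_pi_norm (φd t - (!![l t, m t; 0, l t]).mulVec (φ t)) 0
    have he : (φd t - (!![l t, m t; 0, l t]).mulVec (φ t)) 0 = f₁ t := by
      rw [Pi.sub_apply, (happly (φ t) t).1]
    rw [he] at h0
    exact h0.trans (hφε t ht)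
  have hf₂ε : ∀ t ∈ I, ‖f₂ t‖ ≤ ε := by
    intro t ht
    have h0 := norm_le_pi_norm (φd t - (!![l t, m t; 0, l t]).mulVec (φ t)) 1
    have he : (φd t - (!![l t, m t; 0, l t]).mulVec (φ t)) 1 = f₂ t := by
      rw [Pi.sub_apply, (happly (φ t) t).2]
    rw [he] at h0
    exact h0.trans (hφε t ht)
  have hφ0c : ContinuousOn (fun t => φ t 0) I :=
    fun t ht => ((hasDerivWithinAt_pi.1 (hφ t ht)) 0).continuousWithinAt
  have hφ1c : ContinuousOn (fun t => φ t 1) I :=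
    fun t ht => ((hasDerivWithinAt_pi.1 (hφ t ht)) 1).continuousWithinAt
  have hφd0c : ContinuousOn (fun t => φd t 0) I :=
    (continuous_apply (0 : Fin 2)).comp_continuousOn hφd
  have hφd1c : ContinuousOn (fun t => φd t 1) I :=
    (continuous_apply (1 : Fin 2)).comp_continuousOn hφd
  have hf₁c : ContinuousOn f₁ I := hφd0c.sub ((hl.mul hφ0c).add (hm.mul hφ1c))
  have hf₂c : ContinuousOn f₂ I := hφd1c.sub (hl.mul hφ1c)
  -- g functions
  set g₁ : ℝ → ℂ := fun s => Complex.exp (-L s) * (f₁ s - M s * f₂ s) with hg₁def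
  set g₂ : ℝ → ℂ := fun s => Complex.exp (-L s) * f₂ s with hg₂def
  have hexpc : ContinuousOn (fun s => Complex.exp (-L s)) I :=
    Complex.continuous_exp.comp_continuousOn hLc.neg
  have hg₁c : ContinuousOn g₁ I := hexpc.mul (hf₁c.sub (hMc.mul hf₂c))
  have hg₂c : ContinuousOn g₂ I := hexpc.mul hf₂c
  -- kernel
  set ker : ℝ → ℝ → ℝ := fun t s => (1 + ‖M s - M t‖) * Real.exp (Lr t - Lr s) with hkerdef
  have hkerS : ∀ t ∈ I, EqOn
      (fun s => (1 + ‖∫ τ in t..s, m τ‖) * Real.exp (-∫ τ in t..s, (l τ).re))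
      (ker t) (S t) := by
    intro t ht s hs
    have hsI : s ∈ I := hsubI t ht hs
    have h1 : M s - M t = ∫ τ in t..s, m τ :=
      intervalIntegral.integral_interval_sub_left (hii m hm t₀ ht₀I s hsI) (hii m hm t₀ ht₀I t ht)
    have hlrec : ContinuousOn (fun τ => (l τ).re) I :=
      Complex.continuous_re.comp_continuousOn hl
    have h2 : Lr s - Lr t = ∫ τ in t..s, (l τ).re :=
      intervalIntegral.integral_interval_sub_left
        ((hlrec.mono (hIoc.uIcc_subset ht₀I hsI)).intervalIntegrable)
        ((hlrec.mono (hIoc.uIcc_subset ht₀I ht)).intervalIntegrable)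
    show (1 + ‖∫ τ in t..s, m τ‖) * Real.exp (-∫ τ in t..s, (l τ).re) = ker t s
    rw [← h1, ← h2, hkerdef, neg_sub]
  have hkerint : ∀ t ∈ I, IntegrableOn (ker t) (S t) :=
    fun t ht => ((hker t ht).congr_fun (hkerS t ht) (Smeas b t))
  have hkernonneg : ∀ t s, 0 ≤ ker t s := by
    intro t s
    apply mul_nonneg (by positivity) (Real.exp_nonneg _)
  have hkapeq : ∀ t ∈ I, kappa21 b l m t = ∫ s in S t, ker t s := by
    intro t ht
    exact setIntegral_congr_fun (Smeas b t) (hkerS t ht)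
  -- integrability of g₁, g₂ on the tails
  have hg₂norm : ∀ s ∈ I, ‖g₂ s‖ ≤ Real.exp (-(Lr s)) * ε := by
    intro s hsI
    have h1 : ‖g₂ s‖ = Real.exp (-(Lr s)) * ‖f₂ s‖ := by
      rw [hg₂def]
      simp only [norm_mul, Complex.norm_exp, Complex.neg_re, hLre s hsI]
    rw [h1]
    exact mul_le_mul_of_nonneg_left (hf₂ε s hsI) (Real.exp_nonneg _)
  have hg₁norm : ∀ s ∈ I, ‖g₁ s‖ ≤ Real.exp (-(Lr s)) * (ε * (1 + ‖M s‖)) := by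
    intro s hsI
    have h1 : ‖g₁ s‖ = Real.exp (-(Lr s)) * ‖f₁ s - M s * f₂ s‖ := by
      rw [hg₁def]
      simp only [norm_mul, Complex.norm_exp, Complex.neg_re, hLre s hsI]
    rw [h1]
    apply mul_le_mul_of_nonneg_left _ (Real.exp_nonneg _)
    have h2 : ‖f₁ s - M s * f₂ s‖ ≤ ‖f₁ s‖ + ‖M s‖ * ‖f₂ s‖ := by
      refine (norm_sub_le _ _).trans ?_
      rw [norm_mul]
    have h3 := hf₁ε s hsI
    have h4 := hf₂ε s hsI
    have h5 : ‖M s‖ * ‖f₂ s‖ ≤ ‖M s‖ * ε := mul_le_mul_of_nonneg_left h4 (norm_nonneg _)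
    nlinarith [norm_nonneg (M s)]
  have hexpid : ∀ t s : ℝ, Real.exp (-(Lr t)) * Real.exp (Lr t - Lr s) = Real.exp (-(Lr s)) := by
    intro t s
    rw [← Real.exp_add]
    ring_nf
  have hg₂int : ∀ t ∈ I, IntegrableOn g₂ (S t) := by
    intro t ht
    refine Integrable.mono ((hkerint t ht).const_mul (ε * Real.exp (-(Lr t))))
      ((hg₂c.mono (hsubI t ht)).aestronglyMeasurable (Smeas b t)) ?_
    filter_upwards [ae_restrict_mem (Smeas b t)] with s hs
    have hsI : s ∈ I := hsubI t ht hs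
    have hb1 := hg₂norm s hsI
    have hck : ε * Real.exp (-(Lr t)) * ker t s
        = ε * (1 + ‖M s - M t‖) * Real.exp (-(Lr s)) := by
      rw [hkerdef]
      simp only
      rw [← hexpid t s]
      ring
    rw [Real.norm_eq_abs, abs_of_nonneg (by positivity), hck]
    have hhint : 0 ≤ ε * ‖M s - M t‖ * Real.exp (-(Lr s)) := by positivity
    nlinarith [hhint]
  have hg₁int : ∀ t ∈ I, IntegrableOn g₁ (S t) := by
    intro t ht
    refine Integrable.mono ((hkerint t ht).const_mul (ε * (1 + ‖M t‖) * Real.exp (-(Lr t))))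
      ((hg₁c.mono (hsubI t ht)).aestronglyMeasurable (Smeas b t)) ?_
    filter_upwards [ae_restrict_mem (Smeas b t)] with s hs
    have hsI : s ∈ I := hsubI t ht hs
    have hb1 := hg₁norm s hsI
    have hck : ε * (1 + ‖M t‖) * Real.exp (-(Lr t)) * ker t s
        = ε * (1 + ‖M t‖) * (1 + ‖M s - M t‖) * Real.exp (-(Lr s)) := by
      rw [hkerdef]
      simp only
      rw [← hexpid t s]
      ring
    rw [Real.norm_eq_abs, abs_of_nonneg (by positivity), hck]
    have htri : ‖M s‖ ≤ ‖M t‖ + ‖M s - M t‖ := by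
      calc ‖M s‖ = ‖M t + (M s - M t)‖ := by ring_nf
      _ ≤ ‖M t‖ + ‖M s - M t‖ := norm_add_le _ _
    have h6 : 1 + ‖M s‖ ≤ (1 + ‖M t‖) * (1 + ‖M s - M t‖) := by
      nlinarith [mul_nonneg (norm_nonneg (M t)) (norm_nonneg (M s - M t))]
    calc ‖g₁ s‖ ≤ Real.exp (-(Lr s)) * (ε * (1 + ‖M s‖)) := hb1
      _ ≤ Real.exp (-(Lr s)) * (ε * ((1 + ‖M t‖) * (1 + ‖M s - M t‖))) := by
          exact mul_le_mul_of_nonneg_left (mul_le_mul_of_nonneg_left h6 hε.le)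
            (Real.exp_nonneg _)
      _ = ε * (1 + ‖M t‖) * (1 + ‖M s - M t‖) * Real.exp (-(Lr s)) := by ring
  -- the tail integrals
  set u₁ : ℝ → ℂ := fun t => ∫ s in S t, g₁ s with hu₁def
  set u₂ : ℝ → ℂ := fun t => ∫ s in S t, g₂ s with hu₂def
  have husplit : ∀ (g : ℝ → ℂ), ContinuousOn g I → (∀ t ∈ I, IntegrableOn g (S t)) →
      ∀ u ∈ I, (∫ s in S u, g s) = (∫ s in S t₀, g s) - ∫ s in t₀..u, g s := by
    intro g hg hint u hu
    rcases le_total t₀ u with h | h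
    · have hsp := Ssplit hIoc hI2 hg ht₀I hu h (hint u hu)
      rw [hsp]; ring
    · have hsp := Ssplit hIoc hI2 hg hu ht₀I h (hint t₀ ht₀I)
      rw [hsp, intervalIntegral.integral_symm]; ring
  have hu₁d : ∀ t ∈ I, HasDerivWithinAt u₁ (-(g₁ t)) I t := by
    intro t ht
    have base : HasDerivWithinAt (fun u => (∫ s in S t₀, g₁ s) - ∫ s in t₀..u, g₁ s)
        (-(g₁ t)) I t := (ftc_within hIoc hg₁c ht₀I ht).const_sub _
    exact base.congr (fun u hu => husplit g₁ hg₁c hg₁int u hu) (husplit g₁ hg₁c hg₁int t ht)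
  have hu₂d : ∀ t ∈ I, HasDerivWithinAt u₂ (-(g₂ t)) I t := by
    intro t ht
    have base : HasDerivWithinAt (fun u => (∫ s in S t₀, g₂ s) - ∫ s in t₀..u, g₂ s)
        (-(g₂ t)) I t := (ftc_within hIoc hg₂c ht₀I ht).const_sub _
    exact base.congr (fun u hu => husplit g₂ hg₂c hg₂int u hu) (husplit g₂ hg₂c hg₂int t ht)
  -- the approximating solution
  set x₁ : ℝ → ℂ := fun t => φ t 0 + Complex.exp (L t) * (u₁ t + M t * u₂ t) with hx₁def
  set x₂ : ℝ → ℂ := fun t => φ t 1 + Complex.exp (L t) * u₂ t with hx₂def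
  set x : ℝ → Fin 2 → ℂ := fun t => ![x₁ t, x₂ t] with hxdef
  have hx0 : ∀ t, x t 0 = x₁ t := fun t => rfl
  have hx1 : ∀ t, x t 1 = x₂ t := fun t => rfl
  have hexp1 : ∀ t : ℝ, Complex.exp (L t) * Complex.exp (-(L t)) = 1 := by
    intro t
    rw [← Complex.exp_add]
    simp
  refine ⟨x, ?_, ?_⟩
  · -- x is a solution
    intro t ht
    rw [hasDerivWithinAt_pi]
    intro i
    fin_cases i
    · -- first component
      show HasDerivWithinAt (fun t => x t 0) ((!![l t, m t; 0, l t]).mulVec (x t) 0) I t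
      simp only [hx0, (happly (x t) t).1, hx0, hx1]
      have hD : HasDerivWithinAt x₁
          (φd t 0 + ((Complex.exp (L t) * l t) * (u₁ t + M t * u₂ t)
            + Complex.exp (L t) * (-(g₁ t) + (m t * u₂ t + M t * -(g₂ t))))) I t := by
        exact ((hasDerivWithinAt_pi.1 (hφ t ht)) 0).add
          (((hL t ht).cexp).mul ((hu₁d t ht).add ((hM t ht).mul (hu₂d t ht))))
      convert hD using 1
      have hphid0 : φd t 0 = f₁ t + (l t * φ t 0 + m t * φ t 1) := by
        rw [hf₁def]; ring
      rw [hphid0, hx₁def, hx₂def, hg₁def, hg₂def]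
      simp only
      linear_combination (f₁ t) * hexp1 t
    · -- second component
      show HasDerivWithinAt (fun t => x t 1) ((!![l t, m t; 0, l t]).mulVec (x t) 1) I t
      simp only [hx1, (happly (x t) t).2, hx1]
      have hD : HasDerivWithinAt x₂
          (φd t 1 + ((Complex.exp (L t) * l t) * u₂ t
            + Complex.exp (L t) * -(g₂ t))) I t := by
        exact ((hasDerivWithinAt_pi.1 (hφ t ht)) 1).add
          (((hL t ht).cexp).mul (hu₂d t ht))
      convert hD using 1
      have hphid1 : φd t 1 = f₂ t + l t * φ t 1 := by
        rw [hf₂def]; ring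
      rw [hphid1, hx₂def, hg₂def]
      simp only
      linear_combination (f₂ t) * hexp1 t
  · -- the bound
    intro t ht
    have hK : kappa21 b l m t ≤ sSup (kappa21 b l m '' I) := le_csSup hbdd ⟨t, ht, rfl⟩
    have hκnn : 0 ≤ kappa21 b l m t := by
      rw [hkapeq t ht]
      exact setIntegral_nonneg (Smeas b t) (fun s _ => hkernonneg t s)
    have hKεnn : 0 ≤ sSup (kappa21 b l m '' I) * ε := mul_nonneg (hκnn.trans hK) hε.le
    rw [pi_norm_le_iff_of_nonneg hKεnn]
    have hbnd : ∀ (h : ℝ → ℂ), IntegrableOn h (S t) →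
        (∀ s ∈ S t, ‖h s‖ ≤ ker t s * ε) →
        ‖∫ s in S t, h s‖ ≤ sSup (kappa21 b l m '' I) * ε := by
      intro h hint hb2
      have h1 : ‖∫ s in S t, h s‖ ≤ ∫ s in S t, ker t s * ε := by
        refine norm_integral_le_of_norm_le ((hkerint t ht).mul_const ε) ?_
        filter_upwards [ae_restrict_mem (Smeas b t)] with s hs
        exact hb2 s hs
      have h2 : (∫ s in S t, ker t s * ε) = kappa21 b l m t * ε := by
        rw [integral_mul_const, ← hkapeq t ht]
      rw [h2] at h1
      exact h1.trans (mul_le_mul_of_nonneg_right hK hε.le)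
    intro i
    fin_cases i
    · show ‖(φ t - x t) 0‖ ≤ sSup (kappa21 b l m '' I) * ε
      have hc0 : (φ t - x t) 0
          = -∫ s in S t, (Complex.exp (L t) * g₁ s + (Complex.exp (L t) * M t) * g₂ s) := by
        rw [MeasureTheory.integral_add ((hg₁int t ht).const_mul _) ((hg₂int t ht).const_mul _),
          MeasureTheory.integral_const_mul, MeasureTheory.integral_const_mul]
        rw [Pi.sub_apply, hx0, hx₁def]
        simp only [← hu₁def, ← hu₂def]
        ring
      rw [hc0, norm_neg]
      refine hbnd _ (((hg₁int t ht).const_mul _).add ((hg₂int t ht).const_mul _)) ?_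
      intro s hs
      have hsI : s ∈ I := hsubI t ht hs
      have hrw : Complex.exp (L t) * g₁ s + (Complex.exp (L t) * M t) * g₂ s
          = Complex.exp (L t - L s) * (f₁ s + (M t - M s) * f₂ s) := by
        have hmul : Complex.exp (L t) * Complex.exp (-(L s)) = Complex.exp (L t - L s) := by
          rw [← Complex.exp_add]; ring_nf
        rw [hg₁def, hg₂def]
        simp only
        rw [← hmul]; ring
      rw [hrw, norm_mul]
      have hne : ‖Complex.exp (L t - L s)‖ = Real.exp (Lr t - Lr s) := by
        rw [Complex.norm_exp, Complex.sub_re, hLre t ht, hLre s hsI]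
      rw [hne]
      have hf : ‖f₁ s + (M t - M s) * f₂ s‖ ≤ (1 + ‖M s - M t‖) * ε := by
        calc ‖f₁ s + (M t - M s) * f₂ s‖ ≤ ‖f₁ s‖ + ‖M t - M s‖ * ‖f₂ s‖ := by
              refine (norm_add_le _ _).trans ?_
              rw [norm_mul]
        _ ≤ ε + ‖M s - M t‖ * ε := by
              rw [norm_sub_rev (M t) (M s)]
              exact add_le_add (hf₁ε s hsI)
                (mul_le_mul_of_nonneg_left (hf₂ε s hsI) (norm_nonneg _))
        _ = (1 + ‖M s - M t‖) * ε := by ring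
      calc Real.exp (Lr t - Lr s) * ‖f₁ s + (M t - M s) * f₂ s‖
          ≤ Real.exp (Lr t - Lr s) * ((1 + ‖M s - M t‖) * ε) :=
            mul_le_mul_of_nonneg_left hf (Real.exp_nonneg _)
        _ = ker t s * ε := by rw [hkerdef]; ring
    · show ‖(φ t - x t) 1‖ ≤ sSup (kappa21 b l m '' I) * ε
      have hc1 : (φ t - x t) 1 = -∫ s in S t, Complex.exp (L t) * g₂ s := by
        rw [MeasureTheory.integral_const_mul]
        rw [Pi.sub_apply, hx1, hx₂def]
        simp only [← hu₂def]
        ring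
      rw [hc1, norm_neg]
      refine hbnd _ ((hg₂int t ht).const_mul _) ?_
      intro s hs
      have hsI : s ∈ I := hsubI t ht hs
      have hrw : Complex.exp (L t) * g₂ s = Complex.exp (L t - L s) * f₂ s := by
        have hmul : Complex.exp (L t) * Complex.exp (-(L s)) = Complex.exp (L t - L s) := by
          rw [← Complex.exp_add]; ring_nf
        rw [hg₂def]
        simp only
        rw [← hmul]; ring
      rw [hrw, norm_mul]
      have hne : ‖Complex.exp (L t - L s)‖ = Real.exp (Lr t - Lr s) := by
        rw [Complex.norm_exp, Complex.sub_re, hLre t ht, hLre s hsI]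
      rw [hne]
      calc Real.exp (Lr t - Lr s) * ‖f₂ s‖
          ≤ Real.exp (Lr t - Lr s) * ((1 + ‖M s - M t‖) * ε) := by
            refine mul_le_mul_of_nonneg_left ?_ (Real.exp_nonneg _)
            have := hf₂ε s hsI
            nlinarith [norm_nonneg (M s - M t), hε.le]
        _ = ker t s * ε := by rw [hkerdef]; ring

lemma Kpos (a b : EReal) (hab : a < b) (I : Set ℝ)
    (hI1 : ∀ x : ℝ, a < (x : EReal) → (x : EReal) < b → x ∈ I)
    (l m : ℝ → ℂ)
    (hker : ∀ t ∈ I, IntegrableOn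
      (fun s => (1 + ‖∫ τ in t..s, m τ‖) * Real.exp (-∫ τ in t..s, (l τ).re))
      {s : ℝ | t < s ∧ (s : EReal) < b})
    (hbdd : BddAbove (kappa21 b l m '' I)) :
    0 < sSup (kappa21 b l m '' I) := by
  obtain ⟨q, haq, hqb⟩ := EReal.exists_rat_btwn_of_lt hab
  set t₁ : ℝ := (q : ℝ)
  have ht₁I : t₁ ∈ I := hI1 t₁ haq hqb
  have hpos : 0 < kappa21 b l m t₁ := by
    rw [kappa21,
      setIntegral_pos_iff_support_of_nonneg_ae (ae_of_all _ (fun s => by positivity))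
        (hker t₁ ht₁I)]
    have hsupp : Function.support
        (fun s => (1 + ‖∫ τ in t₁..s, m τ‖) * Real.exp (-∫ τ in t₁..s, (l τ).re)) = univ := by
      ext s
      simp only [Function.mem_support, mem_univ, iff_true]
      positivity
    rw [hsupp, univ_inter]
    obtain ⟨r, hqr, hrb⟩ := EReal.exists_rat_btwn_of_lt hqb
    have hsub : Ioo t₁ ((r : ℝ)) ⊆ {s : ℝ | t₁ < s ∧ (s : EReal) < b} := by
      rintro s ⟨h1, h2⟩
      exact ⟨h1, lt_of_lt_of_le (EReal.coe_lt_coe_iff.2 h2) hrb.le⟩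
    refine lt_of_lt_of_le ?_ (measure_mono hsub)
    rw [Real.volume_Ioo]
    have : t₁ < (r : ℝ) := EReal.coe_lt_coe_iff.1 hqr
    simp [ENNReal.ofReal_pos, this]
  exact lt_of_lt_of_le hpos (le_csSup hbdd ⟨t₁, ht₁I, rfl⟩)

lemma uniqueness (a b : EReal) (hab : a < b) (I : Set ℝ)
    (hI1 : ∀ x : ℝ, a < (x : EReal) → (x : EReal) < b → x ∈ I)
    (hI2 : ∀ x ∈ I, a ≤ (x : EReal) ∧ (x : EReal) ≤ b)
    (l m : ℝ → ℂ) (hl : ContinuousOn l I)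
    (htend : ∀ t₀ : ℝ, a < (t₀ : EReal) → (t₀ : EReal) < b →
        Filter.Tendsto (fun t => ∫ s in t₀..t, (l s).re)
          (Filter.comap (fun x : ℝ => (x : EReal)) (nhdsWithin b (Iio b))) Filter.atTop)
    (C : ℝ) (x y : ℝ → Fin 2 → ℂ)
    (hx : ∀ t ∈ I, HasDerivWithinAt x ((!![l t, m t; 0, l t]).mulVec (x t)) I t)
    (hy : ∀ t ∈ I, HasDerivWithinAt y ((!![l t, m t; 0, l t]).mulVec (y t)) I t)
    (hbound : ∀ t ∈ I, ‖y t - x t‖ ≤ C) : EqOn y x I := by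
  classical
  have hIoc : I.OrdConnected := ordConn hI1 hI2
  have hconv : Convex ℝ I := by
    rw [convex_iff_ordConnected]; exact hIoc
  obtain ⟨q, haq, hqb⟩ := EReal.exists_rat_btwn_of_lt hab
  set t₀ : ℝ := (q : ℝ) with ht₀def
  have ht₀I : t₀ ∈ I := hI1 t₀ haq hqb
  set L : ℝ → ℂ := fun t => ∫ τ in t₀..t, l τ with hLdef
  set Lr : ℝ → ℝ := fun t => ∫ τ in t₀..t, (l τ).re with hLrdef
  have hii : ∀ (f : ℝ → ℂ), ContinuousOn f I → ∀ u ∈ I, ∀ v ∈ I,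
      IntervalIntegrable f volume u v := fun f hf u hu v hv =>
    (hf.mono (hIoc.uIcc_subset hu hv)).intervalIntegrable
  have hL : ∀ t ∈ I, HasDerivWithinAt L (l t) I t := fun t ht => ftc_within hIoc hl ht₀I ht
  have hLre : ∀ t ∈ I, (L t).re = Lr t := by
    intro t ht
    have := Complex.reCLM.intervalIntegral_comp_comm (hii l hl t₀ ht₀I t ht)
    simp only [Complex.reCLM_apply] at this
    rw [hLdef, hLrdef]; exact this.symm
  have hexp1 : ∀ t : ℝ, Complex.exp (L t) * Complex.exp (-(L t)) = 1 := by
    intro t; rw [← Complex.exp_add]; simp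
  have happly : ∀ (v : Fin 2 → ℂ) (t : ℝ),
      ((!![l t, m t; 0, l t]).mulVec v) 0 = l t * v 0 + m t * v 1 ∧
      ((!![l t, m t; 0, l t]).mulVec v) 1 = l t * v 1 := by
    intro v t
    constructor <;>
      simp [Matrix.mulVec, dotProduct, Fin.sum_univ_two, Matrix.vecHead, Matrix.vecTail]
  -- constancy of functions with zero derivative
  have hconst : ∀ w : ℝ → ℂ, (∀ t ∈ I, HasDerivWithinAt w 0 I t) → ∀ t ∈ I, w t = w t₀ := by
    intro w hw t ht
    have h := Convex.norm_image_sub_le_of_norm_hasDerivWithin_le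
      (C := 0) (f' := fun _ => (0 : ℂ)) (fun u hu => hw u hu)
      (fun u _ => by simp) hconv ht₀I ht
    simp only [zero_mul] at h
    have := norm_le_zero_iff.1 (h.trans (by norm_num))
    exact sub_eq_zero.1 this
  -- scalar Liouville-type argument
  have hscalar : ∀ ζ : ℝ → ℂ, (∀ t ∈ I, HasDerivWithinAt ζ (l t * ζ t) I t) →
      (∀ t ∈ I, ‖ζ t‖ ≤ C) → ∀ t ∈ I, ζ t = 0 := by
    intro ζ hζ hζb
    set w : ℝ → ℂ := fun t => Complex.exp (-L t) * ζ t with hwdef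
    have hw : ∀ t ∈ I, HasDerivWithinAt w 0 I t := by
      intro t ht
      have h := ((hL t ht).neg.cexp).mul (hζ t ht)
      exact h.congr_deriv (by ring)
    have hwc : ∀ t ∈ I, Complex.exp (-L t) * ζ t = w t₀ := hconst w hw
    set c : ℂ := w t₀ with hcdef
    have hζeq : ∀ t ∈ I, ζ t = Complex.exp (L t) * c := by
      intro t ht
      linear_combination Complex.exp (L t) * (hwc t ht) - ζ t * hexp1 t
    by_cases hc : c = 0
    · intro t ht; rw [hζeq t ht, hc, mul_zero]
    · exfalso
      have hne : (Filter.comap (fun x : ℝ => (x : EReal)) (nhdsWithin b (Iio b))).NeBot := by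
        rw [Filter.comap_neBot_iff]
        intro U hU
        rw [mem_nhdsWithin] at hU
        obtain ⟨V, hVopen, hbV, hVU⟩ := hU
        obtain ⟨w', hw'b, hIocV⟩ := exists_Ioc_subset_of_mem_nhds (hVopen.mem_nhds hbV) ⟨a, hab⟩
        obtain ⟨r, hr1, hr2⟩ := EReal.exists_rat_btwn_of_lt hw'b
        exact ⟨(r : ℝ), hVU ⟨hIocV ⟨hr1, hr2.le⟩, hr2⟩⟩
      have htop := htend t₀ haq hqb
      have hE : {t : ℝ | (t₀ : EReal) < (t : EReal) ∧ (t : EReal) < b}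
          ∈ Filter.comap (fun x : ℝ => (x : EReal)) (nhdsWithin b (Iio b)) := by
        have hmem : Ioi (t₀ : EReal) ∩ Iio b ∈ nhdsWithin b (Iio b) :=
          Filter.inter_mem (mem_nhdsWithin_of_mem_nhds (isOpen_Ioi.mem_nhds hqb))
            self_mem_nhdsWithin
        exact Filter.preimage_mem_comap hmem
      have hcpos : 0 < ‖c‖ := norm_pos_iff.2 hc
      obtain ⟨t, hR, hE'⟩ :=
        ((htop.eventually_gt_atTop (Real.log (C / ‖c‖))).and
          (Filter.eventually_of_mem hE (fun t ht' => ht'))).exists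
      have htI : t ∈ I := hI1 t (haq.trans hE'.1) hE'.2
      have hb2 : Real.exp (Lr t) * ‖c‖ ≤ C := by
        have h3 := hζb t htI
        rw [hζeq t htI, norm_mul, Complex.norm_exp, hLre t htI] at h3
        exact h3
      have hCpos : 0 < C := lt_of_lt_of_le (by positivity) hb2
      have h4 : Lr t ≤ Real.log (C / ‖c‖) :=
        (Real.le_log_iff_exp_le (div_pos hCpos hcpos)).2 ((le_div_iff₀ hcpos).2 hb2)
      exact absurd h4 (not_le.2 hR)
  -- apply to the components of y - x
  have hz₂d : ∀ t ∈ I, HasDerivWithinAt (fun t => y t 1 - x t 1)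
      (l t * (y t 1 - x t 1)) I t := by
    intro t ht
    have h := ((hasDerivWithinAt_pi.1 (hy t ht)) 1).sub ((hasDerivWithinAt_pi.1 (hx t ht)) 1)
    rw [(happly (y t) t).2, (happly (x t) t).2] at h
    exact h.congr_deriv (by ring)
  have hz₂b : ∀ t ∈ I, ‖y t 1 - x t 1‖ ≤ C := by
    intro t ht
    exact (norm_le_pi_norm (y t - x t) 1).trans (hbound t ht)
  have hz₂0 := hscalar _ hz₂d hz₂b
  have hz₁d : ∀ t ∈ I, HasDerivWithinAt (fun t => y t 0 - x t 0)
      (l t * (y t 0 - x t 0)) I t := by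
    intro t ht
    have h := ((hasDerivWithinAt_pi.1 (hy t ht)) 0).sub ((hasDerivWithinAt_pi.1 (hx t ht)) 0)
    rw [(happly (y t) t).1, (happly (x t) t).1] at h
    exact h.congr_deriv (by linear_combination (m t) * hz₂0 t ht)
  have hz₁b : ∀ t ∈ I, ‖y t 0 - x t 0‖ ≤ C := by
    intro t ht
    exact (norm_le_pi_norm (y t - x t) 0).trans (hbound t ht)
  have hz₁0 := hscalar _ hz₁d hz₁b
  intro t ht
  funext i
  fin_cases i
  · exact sub_eq_zero.1 (hz₁0 t ht)
  · exact sub_eq_zero.1 (hz₂0 t ht)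

theorem statement10 (a b : EReal) (hab : a < b) (I : Set ℝ)
    (hI1 : ∀ x : ℝ, a < (x : EReal) → (x : EReal) < b → x ∈ I)
    (hI2 : ∀ x ∈ I, a ≤ (x : EReal) ∧ (x : EReal) ≤ b)
    (l m : ℝ → ℂ) (hl : ContinuousOn l I) (hm : ContinuousOn m I)
    (hker : ∀ t ∈ I, IntegrableOn
      (fun s => (1 + ‖∫ τ in t..s, m τ‖) * Real.exp (-∫ τ in t..s, (l τ).re))
      {s : ℝ | t < s ∧ (s : EReal) < b})
    (hbdd : BddAbove (kappa21 b l m '' I)) :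
    UlamStable2C I (fun t => !![l t, m t; 0, l t]) (sSup (kappa21 b l m '' I)) ∧
    ((∀ t₀ : ℝ, a < (t₀ : EReal) → (t₀ : EReal) < b →
        Tendsto (fun t => ∫ s in t₀..t, (l s).re)
          (Filter.comap (fun x : ℝ => (x : EReal)) (nhdsWithin b (Iio b))) atTop) →
      ∀ ε : ℝ, 0 < ε → ∀ φ φd : ℝ → Fin 2 → ℂ,
        (∀ t ∈ I, HasDerivWithinAt φ (φd t) I t) →
        ContinuousOn φd I →
        (∀ t ∈ I, ‖φd t - (!![l t, m t; 0, l t]).mulVec (φ t)‖ ≤ ε) →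
        ∃ x : ℝ → Fin 2 → ℂ,
          ((∀ t ∈ I, HasDerivWithinAt x ((!![l t, m t; 0, l t]).mulVec (x t)) I t) ∧
            ∀ t ∈ I, ‖φ t - x t‖ ≤ sSup (kappa21 b l m '' I) * ε) ∧
          ∀ y : ℝ → Fin 2 → ℂ,
            ((∀ t ∈ I, HasDerivWithinAt y ((!![l t, m t; 0, l t]).mulVec (y t)) I t) ∧
              ∀ t ∈ I, ‖φ t - y t‖ ≤ sSup (kappa21 b l m '' I) * ε) →
            EqOn y x I) := by

  constructor
  · refine ⟨Kpos a b hab I hI1 l m hker hbdd, ?_⟩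
    intro ε hε φ φd hφ hφd hφε
    exact construction a b hab I hI1 hI2 l m hl hm hker hbdd ε hε φ φd hφ hφd hφε
  · intro htend ε hε φ φd hφ hφd hφε
    obtain ⟨x, hx1, hx2⟩ :=
      construction a b hab I hI1 hI2 l m hl hm hker hbdd ε hε φ φd hφ hφd hφε
    refine ⟨x, ⟨hx1, hx2⟩, ?_⟩
    rintro y ⟨hy1, hy2⟩
    apply uniqueness a b hab I hI1 hI2 l m hl htend
      (2 * (sSup (kappa21 b l m '' I) * ε)) x y hx1 hy1
    intro t ht
    have hdec : y t - x t = (φ t - x t) - (φ t - y t) := by abel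
    rw [hdec]
    have := norm_sub_le (φ t - x t) (φ t - y t)
    have h1 := hx2 t ht
    have h2 := hy2 t ht
    linarith
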